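/- Let n ≥ 2 and let f, g : ℂ^{n-1} → ℂ be entire functions. For each t ∈ [0,1] define γ(t) : ℂⁿ → ℂⁿ by γ(t)(z_1, …, z_n) = (z_1, …, z_{n-1}, (1−t)·f(z_1, …, z_{n-1}) + exp((1−t)·g(z_1, …, z_{n-1}))·z_n). Then for every t ∈ [0,1] the map γ(t) is a bijective holomorphic map of ℂⁿ onto itself with holomorphic inverse; moreover γ(1) is the identity map and γ(0) is the overshear (z_1, …, z_n) ↦ (z_1, …, z_{n-1}, f(z_1, …, z_{n-1}) + exp(g(z_1, …, z_{n-1}))·z_n). -/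

import Mathlib

/-- For `n ≥ 2` and entire `f, g` on `ℂ^{n-1}`, each map
`γ(t)(z, zₙ) = (z, (1−t)·f(z) + exp((1−t)·g(z))·zₙ)`, `t ∈ [0,1]`, is a
biholomorphic automorphism of `ℂⁿ = ℂ^{n-1} × ℂ`; moreover `γ(1) = id` and
`γ(0)` is the overshear `(z, zₙ) ↦ (z, f(z) + exp(g(z))·zₙ)`. -/
theorem overshear_path_is_automorphism
    (n : ℕ) (hn : 2 ≤ n)
    (f g : (Fin (n - 1) → ℂ) → ℂ)
    (hf : Differentiable ℂ f) (hg : Differentiable ℂ g)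
    (γ : ℝ → ((Fin (n - 1) → ℂ) × ℂ) → ((Fin (n - 1) → ℂ) × ℂ))
    (hγ : ∀ t : ℝ, ∀ p : (Fin (n - 1) → ℂ) × ℂ,
      γ t p = (p.1, ((1 - t : ℝ) : ℂ) * f p.1
        + Complex.exp (((1 - t : ℝ) : ℂ) * g p.1) * p.2)) :
    (∀ t ∈ Set.Icc (0 : ℝ) 1,
      Function.Bijective (γ t) ∧ Differentiable ℂ (γ t) ∧
      ∃ G : ((Fin (n - 1) → ℂ) × ℂ) → ((Fin (n - 1) → ℂ) × ℂ),
        Differentiable ℂ G ∧ Function.LeftInverse G (γ t) ∧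
        Function.RightInverse G (γ t)) ∧
    (∀ p : (Fin (n - 1) → ℂ) × ℂ, γ 1 p = p) ∧
    (∀ p : (Fin (n - 1) → ℂ) × ℂ,
      γ 0 p = (p.1, f p.1 + Complex.exp (g p.1) * p.2)) := by
  refine ⟨fun t _ => ?_, fun p => by simp [hγ 1 p], fun p => by simp [hγ 0 p]⟩
  set c : ℂ := ((1 - t : ℝ) : ℂ) with hc
  set G : ((Fin (n - 1) → ℂ) × ℂ) → ((Fin (n - 1) → ℂ) × ℂ) :=
    fun p => (p.1, (p.2 - c * f p.1) * Complex.exp (-(c * g p.1))) with hG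
  have hdf : Differentiable ℂ (fun p : (Fin (n - 1) → ℂ) × ℂ => f p.1) :=
    hf.comp differentiable_fst
  have hdg : Differentiable ℂ (fun p : (Fin (n - 1) → ℂ) × ℂ => g p.1) :=
    hg.comp differentiable_fst
  have hGd : Differentiable ℂ G := by
    refine differentiable_fst.prodMk ?_
    exact (differentiable_snd.sub ((differentiable_const c).mul hdf)).mul
      (Complex.differentiable_exp.comp ((differentiable_const c).mul hdg).neg)
  have hleft : Function.LeftInverse G (γ t) := by
    intro p
    rw [hγ t p]
    simp only [hG]
    ext
    · rfl
    · simp only []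
      rw [add_sub_cancel_left, mul_comm (Complex.exp (c * g p.1)) p.2, mul_assoc,
        ← Complex.exp_add, add_neg_cancel, Complex.exp_zero, mul_one]
  have hright : Function.RightInverse G (γ t) := by
    intro p
    rw [hγ t (G p)]
    simp only [hG]
    ext
    · rfl
    · simp only []
      rw [mul_comm (p.2 - c * f p.1), ← mul_assoc, ← Complex.exp_add,
        add_neg_cancel, Complex.exp_zero, one_mul, add_sub_cancel]
  have hγd : Differentiable ℂ (γ t) := by
    have : γ t = fun p : (Fin (n - 1) → ℂ) × ℂ =>
        (p.1, c * f p.1 + Complex.exp (c * g p.1) * p.2) := funext (hγ t)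
    rw [this]
    exact differentiable_fst.prodMk
      (((differentiable_const c).mul hdf).add
        ((Complex.differentiable_exp.comp ((differentiable_const c).mul hdg)).mul
          differentiable_snd))
  exact ⟨⟨hleft.injective, hright.surjective⟩, hγd, G, hGd, hleft, hright⟩
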